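/- Let n ≥ 2 and let M be an n×n array of unknowns X_{i,j} ∈ ℂ* (0 ≤ i,j ≤ n-1). Suppose one prescribes: all row products, all column products, all n cyclic 'large antidiagonal' products (products of X_{i,j} over i+j ≡ c mod n for each c), and the product ∏_{i+j<n-1} X_{i,j}, subject to the compatibility conditions that the product of all prescribed row products equals the product of all prescribed column products equals the product of all prescribed antidiagonal products. Then the entries of M are uniquely determined by the top-left (n-2)×(n-1) block of entries together with the prescribed products. In particular the solution set is parameterized by (ℂ*)^{(n-1)(n-2)}. -/

import Mathlib

open Finset in
/-- an `n × n` array of nonzero complex numbers with prescribed row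
products, column products, cyclic antidiagonal products (over `i + j ≡ c mod n`),
and prescribed product over the region `i + j < n - 1` (the midline equation),
subject to the compatibility that the total products of the prescribed row, column
and antidiagonal products agree, is uniquely determined by its top-left
`(n-2) × (n-1)` block of entries.  (Hence the solution set is parameterized by the
`(n-1)(n-2)` free entries of the block.) -/
theorem stmt8 {n : ℕ} (hn : 2 ≤ n) (r c d : Fin n → ℂ) (m : ℂ)
    (hr : ∀ i, r i ≠ 0) (hc : ∀ j, c j ≠ 0) (hd : ∀ a, d a ≠ 0) (hm : m ≠ 0)
    (hcompat₁ : ∏ i, r i = ∏ j, c j)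
    (hcompat₂ : ∏ i, r i = ∏ a, d a)
    (X Y : Fin n → Fin n → ℂ)
    (hX0 : ∀ i j, X i j ≠ 0) (hY0 : ∀ i j, Y i j ≠ 0)
    (hXr : ∀ i, ∏ j, X i j = r i) (hYr : ∀ i, ∏ j, Y i j = r i)
    (hXc : ∀ j, ∏ i, X i j = c j) (hYc : ∀ j, ∏ i, Y i j = c j)
    (hXd : ∀ a : Fin n, ∏ i, X i (a - i) = d a)
    (hYd : ∀ a : Fin n, ∏ i, Y i (a - i) = d a)
    (hXm : ∏ p ∈ univ.filter (fun p : Fin n × Fin n => (p.1 : ℕ) + (p.2 : ℕ) < n - 1),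
        X p.1 p.2 = m)
    (hYm : ∏ p ∈ univ.filter (fun p : Fin n × Fin n => (p.1 : ℕ) + (p.2 : ℕ) < n - 1),
        Y p.1 p.2 = m)
    (hblock : ∀ i j : Fin n, (i : ℕ) < n - 2 → (j : ℕ) < n - 1 → X i j = Y i j) :
    X = Y := by

  haveI : NeZero n := ⟨by omega⟩
  set p : Fin n := ⟨n - 2, by omega⟩ with hp
  set q : Fin n := ⟨n - 1, by omega⟩ with hq
  have hone : ((1 : Fin n) : ℕ) = 1 := by
    rw [Fin.val_one']; exact Nat.mod_eq_of_lt (by omega)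
  have hpq : q ≠ p := by
    intro h
    have h' : n - 1 = n - 2 := congrArg Fin.val h
    omega
  have hqp1 : q = p + 1 := by
    apply Fin.ext
    rw [Fin.add_def, hone]
    show n - 1 = (n - 2 + 1) % n
    rw [Nat.mod_eq_of_lt (by omega)]
    omega
  -- Step 1: rows with index < n - 2 agree completely
  have h1 : ∀ i j : Fin n, (i : ℕ) < n - 2 → X i j = Y i j := by
    intro i j hi
    by_cases hj : (j : ℕ) < n - 1
    · exact hblock i j hi hj
    · have hjq : j = q := by
        apply Fin.ext
        show (j : ℕ) = n - 1
        have := j.isLt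
        omega
      subst hjq
      have e1 := Finset.mul_prod_erase Finset.univ (X i) (Finset.mem_univ q)
      have e2 := Finset.mul_prod_erase Finset.univ (Y i) (Finset.mem_univ q)
      have hrest : (∏ x ∈ Finset.univ.erase q, X i x)
          = ∏ x ∈ Finset.univ.erase q, Y i x := by
        refine Finset.prod_congr rfl fun x hx => ?_
        have hxq : x ≠ q := (Finset.mem_erase.mp hx).1
        have hxv : (x : ℕ) ≠ n - 1 := fun h => hxq (Fin.ext h)
        have := x.isLt
        exact hblock i x hi (by omega)
      have hXY : X i q * ∏ x ∈ Finset.univ.erase q, X i x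
          = Y i q * ∏ x ∈ Finset.univ.erase q, Y i x := by
        rw [e1, e2, hXr i, hYr i]
      rw [hrest] at hXY
      exact mul_right_cancel₀
        (Finset.prod_ne_zero_iff.mpr fun x _ => hY0 i x) hXY
  -- helper to reduce a product over all indices to the two unknown ones
  have key : ∀ (f g : Fin n → ℂ), (∀ i, g i ≠ 0) →
      (∀ i : Fin n, (i : ℕ) < n - 2 → f i = g i) → (∏ i, f i) = (∏ i, g i) →
      f p * f q = g p * g q := by
    intro f g hg0 hfg hprod
    have hqmem : q ∈ Finset.univ.erase p := Finset.mem_erase.mpr ⟨hpq, Finset.mem_univ q⟩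
    have e1 : (∏ i, f i) = f p * (f q * ∏ i ∈ (Finset.univ.erase p).erase q, f i) := by
      rw [← Finset.mul_prod_erase _ f (Finset.mem_univ p), ← Finset.mul_prod_erase _ f hqmem]
    have e2 : (∏ i, g i) = g p * (g q * ∏ i ∈ (Finset.univ.erase p).erase q, g i) := by
      rw [← Finset.mul_prod_erase _ g (Finset.mem_univ p), ← Finset.mul_prod_erase _ g hqmem]
    have hrest : (∏ i ∈ (Finset.univ.erase p).erase q, f i)
        = ∏ i ∈ (Finset.univ.erase p).erase q, g i := by
      refine Finset.prod_congr rfl fun x hx => ?_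
      have hx1 : x ≠ q := (Finset.mem_erase.mp hx).1
      have hx2 : x ≠ p := (Finset.mem_erase.mp (Finset.mem_erase.mp hx).2).1
      have h1' : (x : ℕ) ≠ n - 1 := fun h => hx1 (Fin.ext h)
      have h2' : (x : ℕ) ≠ n - 2 := fun h => hx2 (Fin.ext h)
      have := x.isLt
      exact hfg x (by omega)
    have hXY : f p * f q * ∏ i ∈ (Finset.univ.erase p).erase q, f i
        = g p * g q * ∏ i ∈ (Finset.univ.erase p).erase q, g i := by
      rw [mul_assoc, mul_assoc, ← e1, ← e2, hprod]
    rw [hrest] at hXY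
    exact mul_right_cancel₀
      (Finset.prod_ne_zero_iff.mpr fun x _ => hg0 x) hXY
  -- Step 2: column relations
  have h2 : ∀ j, X p j * X q j = Y p j * Y q j := fun j =>
    key (fun i => X i j) (fun i => Y i j) (fun i => hY0 i j)
      (fun i hi => h1 i j hi) (by rw [hXc, hYc])
  -- Step 3: antidiagonal relations
  have h3 : ∀ b : Fin n, X p (b + 1) * X q b = Y p (b + 1) * Y q b := by
    intro b
    have hkey := key (fun i => X i ((b + q) - i)) (fun i => Y i ((b + q) - i))
      (fun i => hY0 i _) (fun i hi => h1 i _ hi) (by rw [hXd, hYd])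
    have hq' : (b + q) - q = b := by abel
    have hp' : (b + q) - p = b + 1 := by rw [hqp1]; abel
    simpa only [hq', hp'] using hkey
  -- Step 4: the midline equation determines X p 0
  have h4 : X p 0 = Y p 0 := by
    set S := Finset.univ.filter
      (fun t : Fin n × Fin n => (t.1 : ℕ) + (t.2 : ℕ) < n - 1) with hS
    have hmem : (p, (0 : Fin n)) ∈ S := by
      refine Finset.mem_filter.mpr ⟨Finset.mem_univ _, ?_⟩
      show (p : ℕ) + ((0 : Fin n) : ℕ) < n - 1
      rw [Fin.val_zero]
      show n - 2 + 0 < n - 1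
      omega
    have e1 := Finset.mul_prod_erase S (fun t : Fin n × Fin n => X t.1 t.2) hmem
    have e2 := Finset.mul_prod_erase S (fun t : Fin n × Fin n => Y t.1 t.2) hmem
    simp only at e1 e2
    have hrest : (∏ t ∈ S.erase (p, (0 : Fin n)), X t.1 t.2)
        = ∏ t ∈ S.erase (p, (0 : Fin n)), Y t.1 t.2 := by
      refine Finset.prod_congr rfl fun t ht => ?_
      have ht1 : t ≠ (p, (0 : Fin n)) := (Finset.mem_erase.mp ht).1
      have ht2 : (t.1 : ℕ) + (t.2 : ℕ) < n - 1 := by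
        have := (Finset.mem_erase.mp ht).2
        rw [hS, Finset.mem_filter] at this
        exact this.2
      refine h1 t.1 t.2 ?_
      rcases Nat.lt_or_ge (t.1 : ℕ) (n - 2) with h | h
      · exact h
      · exfalso
        have hv1 : (t.1 : ℕ) = n - 2 := by
          have := t.1.isLt
          omega
        have hv2 : (t.2 : ℕ) = 0 := by omega
        exact ht1 (Prod.ext (Fin.ext hv1) (Fin.ext (by rw [hv2, Fin.val_zero])))
    have hXY : X p 0 * ∏ t ∈ S.erase (p, (0 : Fin n)), X t.1 t.2
        = Y p 0 * ∏ t ∈ S.erase (p, (0 : Fin n)), Y t.1 t.2 := by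
      rw [e1, e2, hXm, hYm]
    rw [hrest] at hXY
    exact mul_right_cancel₀
      (Finset.prod_ne_zero_iff.mpr fun t _ => hY0 t.1 t.2) hXY
  -- Step 5: induction along the two bottom rows
  have h5 : ∀ k : ℕ, ∀ hk : k < n,
      X p ⟨k, hk⟩ = Y p ⟨k, hk⟩ ∧ X q ⟨k, hk⟩ = Y q ⟨k, hk⟩ := by
    intro k
    induction k with
    | zero =>
      intro hk
      have h0 : (⟨0, hk⟩ : Fin n) = 0 := by
        apply Fin.ext; rw [Fin.val_zero]
      rw [h0]
      refine ⟨h4, ?_⟩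
      have h2' := h2 0
      rw [h4] at h2'
      exact mul_left_cancel₀ (hY0 p 0) h2'
    | succ k ih =>
      intro hk
      have hk' : k < n := by omega
      obtain ⟨ihp, ihq⟩ := ih hk'
      have hadd : (⟨k, hk'⟩ : Fin n) + 1 = ⟨k + 1, hk⟩ := by
        apply Fin.ext
        rw [Fin.add_def, hone]
        exact Nat.mod_eq_of_lt hk
      have h3' := h3 ⟨k, hk'⟩
      rw [hadd, ihq] at h3'
      have hXp : X p ⟨k + 1, hk⟩ = Y p ⟨k + 1, hk⟩ :=
        mul_right_cancel₀ (hY0 q ⟨k, hk'⟩) h3'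
      refine ⟨hXp, ?_⟩
      have h2' := h2 ⟨k + 1, hk⟩
      rw [hXp] at h2'
      exact mul_left_cancel₀ (hY0 p ⟨k + 1, hk⟩) h2'
  funext i j
  rcases Nat.lt_or_ge (i : ℕ) (n - 2) with hi | hi
  · exact h1 i j hi
  · have hilt := i.isLt
    rcases Nat.lt_or_ge (i : ℕ) (n - 1) with hi2 | hi2
    · have hip : i = p := Fin.ext (show (i : ℕ) = n - 2 by omega)
      subst hip
      have := (h5 j.val j.isLt).1
      simpa using this
    · have hiq : i = q := Fin.ext (show (i : ℕ) = n - 1 by omega)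
      subst hiq
      have := (h5 j.val j.isLt).2
      simpa using this
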